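/- Let p ∈ ℝ, a ≠ 2, and let f be a probability density function on (x_i, x_f) that is differentiable with f'(x) < 0 on (x_i, x_f) and satisfies lim_{x→x_f} f(x)^{2−a} = 0. Then the down-moment with b = 1 reduces to a power of the Rényi entropy power: Ξ_{p,a,1}[f] = ∫ |∫_x^{x_f} f(t)^{1−a} |f'(t)| dt|^p f(x) dx = |2−a|^{−p} ∫ f(x)^{1+p(2−a)} dx, whenever the integrals are finite. -/

import Mathlib

open MeasureTheory Set Filter Topology

noncomputable section

/-- The open interval with extended-real endpoints, viewed as a set of reals. -/
def intIoo (a b : EReal) : Set ℝ := {x : ℝ | a < (x : EReal) ∧ (x : EReal) < b}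

lemma measurableSet_intIoo (a b : EReal) : MeasurableSet (intIoo a b) := by
  have : intIoo a b = (fun x : ℝ => (x : EReal)) ⁻¹' (Set.Ioo a b) := rfl
  rw [this]
  exact measurableSet_Ioo.preimage continuous_coe_real_ereal.measurable

lemma intIoo_top (x : ℝ) : intIoo (x : EReal) ⊤ = Set.Ioi x := by
  ext t; simp [intIoo, EReal.coe_lt_coe_iff]

lemma intIoo_coe (x r : ℝ) : intIoo (x : EReal) (r : EReal) = Set.Ioo x r := by
  ext t; simp [intIoo, EReal.coe_lt_coe_iff]

lemma ftc_Ioo {g G : ℝ → ℝ} {x r m : ℝ} (hxr : x < r)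
    (hderiv : ∀ t ∈ Set.Ico x r, HasDerivAt g (G t) t)
    (hint : IntegrableOn G (Set.Ioo x r))
    (hlim : Tendsto g (𝓝[<] r) (𝓝 m)) :
    ∫ t in Set.Ioo x r, G t = m - g x := by
  have cover : AECover (volume.restrict (Set.Ioo x r)) (𝓝[<] r) (fun y => Set.Ioo x y) := by
    constructor
    · filter_upwards [ae_restrict_mem measurableSet_Ioo] with t ht
      have h1 : Set.Ioi t ∈ 𝓝[<] r := mem_nhdsWithin_of_mem_nhds (Ioi_mem_nhds ht.2)
      filter_upwards [h1] with y hy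
      exact ⟨ht.1, hy⟩
    · exact fun _ => measurableSet_Ioo
  refine cover.integral_eq_of_tendsto _ hint ?_
  have hev : Set.Ioo x r ∈ 𝓝[<] r := Ioo_mem_nhdsLT_of_mem ⟨hxr, le_rfl⟩
  refine Tendsto.congr' ?_ (hlim.sub_const (g x))
  filter_upwards [hev] with y hy
  rw [Measure.restrict_restrict measurableSet_Ioo]
  have hsub : Set.Ioo x y ∩ Set.Ioo x r = Set.Ioo x y := by
    rw [Set.inter_eq_left]; exact Set.Ioo_subset_Ioo le_rfl hy.2.le
  rw [hsub, ← MeasureTheory.integral_Ioc_eq_integral_Ioo,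
    ← intervalIntegral.integral_of_le hy.1.le]
  symm
  apply intervalIntegral.integral_eq_sub_of_hasDerivAt
  · intro t ht
    rw [Set.uIcc_of_le hy.1.le] at ht
    exact hderiv t ⟨ht.1, lt_of_le_of_lt ht.2 hy.2⟩
  · rw [intervalIntegrable_iff_integrableOn_Ioc_of_le hy.1.le]
    exact hint.mono_set (fun t ht => ⟨ht.1, lt_of_le_of_lt ht.2 hy.2⟩)

lemma coe_tendsto_top : Tendsto (fun x : ℝ => (x : EReal)) atTop (𝓝[<] (⊤ : EReal)) := by
  apply tendsto_nhdsWithin_of_tendsto_nhds_of_eventually_within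
  · rw [EReal.tendsto_nhds_top_iff_real]
    intro y
    filter_upwards [eventually_gt_atTop y] with t ht
    exact_mod_cast ht
  · exact Eventually.of_forall (fun t => EReal.coe_lt_top t)

lemma coe_tendsto_coe (r : ℝ) :
    Tendsto (fun x : ℝ => (x : EReal)) (𝓝[<] r) (𝓝[<] (r : EReal)) := by
  apply tendsto_nhdsWithin_of_tendsto_nhds_of_eventually_within
  · exact EReal.tendsto_coe.mpr (tendsto_id.mono_left nhdsWithin_le_nhds)
  · filter_upwards [self_mem_nhdsWithin] with t ht
    exact EReal.coe_lt_coe_iff.mpr ht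

/-- for `b = 1` the down-moment reduces to a power of the Rényi
entropy power: `Ξ_{p,a,1}[f] = |2-a|^{-p} ∫ f^{1+p(2-a)}`. -/
theorem down_moment_b_one_reduces_to_entropy
    (p a : ℝ) (ha : a ≠ 2)
    (xi xf : EReal) (hif : xi < xf)
    (f f' : ℝ → ℝ)
    (hf_meas : Measurable f)
    (hf_nonneg : ∀ x, 0 ≤ f x)
    (hf_supp : ∀ x ∉ intIoo xi xf, f x = 0)
    (hf_int : (∫ x, f x) = 1)
    (hf' : ∀ x ∈ intIoo xi xf, HasDerivAt f (f' x) x)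
    (hf'_neg : ∀ x ∈ intIoo xi xf, f' x < 0)
    (hlim : Tendsto (fun x => f x ^ (2 - a))
      (Filter.comap (fun x : ℝ => (x : EReal)) (𝓝[<] xf)) (𝓝 0))
    (hfin_inner : ∀ x ∈ intIoo xi xf,
      IntegrableOn (fun t => f t ^ (1 - a) * |f' t|) (intIoo (x : EReal) xf))
    (hfin1 : IntegrableOn
      (fun x : ℝ =>
        |(∫ t in intIoo (x : EReal) xf, f t ^ (1 - a) * |f' t|)| ^ p * f x)
      (intIoo xi xf))
    (hfin2 : IntegrableOn (fun x => f x ^ (1 + p * (2 - a))) (intIoo xi xf)) :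
    (∫ x in intIoo xi xf,
        |(∫ t in intIoo (x : EReal) xf, f t ^ (1 - a) * |f' t|)| ^ p * f x)
      = |2 - a| ^ (-p) * ∫ x in intIoo xi xf, f x ^ (1 + p * (2 - a)) := by
  -- strict antitonicity on the interval
  have hanti : ∀ x y : ℝ, x ∈ intIoo xi xf → y ∈ intIoo xi xf → x < y → f y < f x := by
    intro x y hx hy hxy
    have hsub : Set.Icc x y ⊆ intIoo xi xf := by
      intro t ht
      exact ⟨lt_of_lt_of_le hx.1 (EReal.coe_le_coe_iff.mpr ht.1),
        lt_of_le_of_lt (EReal.coe_le_coe_iff.mpr ht.2) hy.2⟩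
    have hSA : StrictAntiOn f (Set.Icc x y) := by
      apply strictAntiOn_of_deriv_neg (convex_Icc x y)
      · exact fun t ht => (hf' t (hsub ht)).continuousAt.continuousWithinAt
      · intro t ht
        rw [interior_Icc] at ht
        have ht' := hsub ⟨ht.1.le, ht.2.le⟩
        rw [(hf' t ht').deriv]
        exact hf'_neg t ht'
    exact hSA ⟨le_rfl, hxy.le⟩ ⟨hxy.le, le_rfl⟩ hxy
  -- positivity on the open interval
  have hpos : ∀ x ∈ intIoo xi xf, 0 < f x := by
    intro x hx
    obtain ⟨y, hy1, hy2⟩ := EReal.exists_between_coe_real hx.2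
    have hy : y ∈ intIoo xi xf := ⟨hx.1.trans hy1, hy2⟩
    have hxy : x < y := EReal.coe_lt_coe_iff.mp hy1
    have h1 := hanti x y hx hy hxy
    have h2 := hf_nonneg y
    linarith
  -- the case a > 2 is impossible
  have ha2 : a < 2 := by
    rcases lt_or_gt_of_ne ha with h | h
    · exact h
    exfalso
    obtain ⟨x0, h1, h2⟩ := EReal.exists_between_coe_real hif
    have hx0 : x0 ∈ intIoo xi xf := ⟨h1, h2⟩
    obtain ⟨L, hLne, hLcoe⟩ : ∃ L : Filter ℝ, L.NeBot ∧
        Tendsto (fun x : ℝ => (x : EReal)) L (𝓝[<] xf) := by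
      by_cases htop : xf = ⊤
      · exact ⟨atTop, atTop_neBot, htop ▸ coe_tendsto_top⟩
      · have hbot : xf ≠ ⊥ := ne_bot_of_gt h2
        lift xf to ℝ using ⟨htop, hbot⟩ with r
        exact ⟨𝓝[<] r, inferInstance, coe_tendsto_coe r⟩
    haveI := hLne
    have hev : ∀ᶠ x : ℝ in L, x0 < x ∧ x ∈ intIoo xi xf := by
      have hmem : Set.Ioo (x0 : EReal) xf ∈ 𝓝[<] xf := by
        rw [← Set.Ioi_inter_Iio]
        exact inter_mem (mem_nhdsWithin_of_mem_nhds (isOpen_Ioi.mem_nhds h2))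
          self_mem_nhdsWithin
      filter_upwards [hLcoe.eventually_mem hmem] with x hx
      exact ⟨EReal.coe_lt_coe_iff.mp hx.1, ⟨h1.trans hx.1, hx.2⟩⟩
    have hev2 : ∀ᶠ x in L, f x0 ^ (2 - a) ≤ f x ^ (2 - a) := by
      filter_upwards [hev] with x hx
      exact Real.rpow_le_rpow_of_nonpos (hpos x hx.2)
        (hanti x0 x hx0 hx.2 hx.1).le (by linarith)
    have hlim' : Tendsto (fun x => f x ^ (2 - a)) L (𝓝 0) :=
      hlim.mono_left (tendsto_iff_comap.mp hLcoe)
    have hle := ge_of_tendsto hlim' hev2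
    have hgt := Real.rpow_pos_of_pos (hpos x0 hx0) (2 - a)
    linarith
  have h2a : (0 : ℝ) < 2 - a := by linarith
  have hne1 : (2 : ℝ) - a ≠ 0 := by linarith
  have hne2 : a - 2 ≠ 0 := by intro h; apply hne1; linarith
  -- derivative of the antiderivative
  have hderivg : ∀ t ∈ intIoo xi xf,
      HasDerivAt (fun u => f u ^ (2 - a) / (a - 2)) (f t ^ (1 - a) * |f' t|) t := by
    intro t ht
    have h1 := ((hf' t ht).rpow_const (p := 2 - a) (Or.inl (hpos t ht).ne')).div_const (a - 2)
    refine h1.congr_deriv ?_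
    rw [abs_of_neg (hf'_neg t ht)]
    have hexp : (2 : ℝ) - a - 1 = 1 - a := by ring
    rw [hexp]
    field_simp
    ring
  have hlimg : Tendsto (fun u => f u ^ (2 - a) / (a - 2))
      (Filter.comap (fun x : ℝ => (x : EReal)) (𝓝[<] xf)) (𝓝 0) := by
    simpa using hlim.div_const (a - 2)
  -- evaluation of the inner integral
  have hinner : ∀ x ∈ intIoo xi xf,
      (∫ t in intIoo (x : EReal) xf, f t ^ (1 - a) * |f' t|)
        = f x ^ (2 - a) / (2 - a) := by
    intro x hx
    have hI := hfin_inner x hx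
    have key : (∫ t in intIoo (x : EReal) xf, f t ^ (1 - a) * |f' t|)
        = 0 - f x ^ (2 - a) / (a - 2) := by
      by_cases htop : xf = ⊤
      · subst htop
        rw [intIoo_top]
        rw [intIoo_top] at hI
        refine integral_Ioi_of_hasDerivAt_of_tendsto
          (hderivg x hx).continuousAt.continuousWithinAt ?_ hI ?_
        · intro t ht
          exact hderivg t ⟨hx.1.trans (EReal.coe_lt_coe_iff.mpr ht), EReal.coe_lt_top t⟩
        · exact hlimg.mono_left (tendsto_iff_comap.mp coe_tendsto_top)
      · have hbot : xf ≠ ⊥ := ne_bot_of_gt hx.2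
        lift xf to ℝ using ⟨htop, hbot⟩ with r
        rw [intIoo_coe] at hI ⊢
        have hxr : x < r := EReal.coe_lt_coe_iff.mp hx.2
        refine ftc_Ioo hxr ?_ hI
          (hlimg.mono_left (tendsto_iff_comap.mp (coe_tendsto_coe r)))
        intro t ht
        exact hderivg t ⟨hx.1.trans_le (EReal.coe_le_coe_iff.mpr ht.1),
          EReal.coe_lt_coe_iff.mpr ht.2⟩
    rw [key]
    field_simp
    ring
  -- pointwise identity for the integrand
  have hfinal : Set.EqOn
      (fun x : ℝ => |(∫ t in intIoo (x : EReal) xf, f t ^ (1 - a) * |f' t|)| ^ p * f x)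
      (fun x : ℝ => |2 - a| ^ (-p) * f x ^ (1 + p * (2 - a))) (intIoo xi xf) := by
    intro x hx
    simp only
    rw [hinner x hx]
    have hfx := hpos x hx
    have hfp := Real.rpow_pos_of_pos hfx (2 - a)
    rw [abs_of_pos (div_pos hfp h2a), abs_of_pos h2a,
      Real.div_rpow hfp.le h2a.le, ← Real.rpow_mul hfx.le,
      Real.rpow_neg h2a.le, div_eq_mul_inv]
    have hsplit : f x ^ (1 + p * (2 - a)) = f x ^ ((2 - a) * p) * f x := by
      rw [Real.rpow_add hfx, Real.rpow_one, mul_comm (2 - a) p]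
      exact mul_comm _ _
    rw [hsplit]
    ring
  rw [setIntegral_congr_fun (measurableSet_intIoo xi xf) hfinal, integral_const_mul]
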